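/- For a general A_n quiver with arbitrary orientation, and morphisms Θ: M1 → M2 and Ψ: M2 → M3 between direct sums of interval representations, the diagonal block of the composition equals the composition of the diagonal blocks: for every interval I[a,b], π^3_{a,b}∘(ΨΘ)∘ι^1_{a,b} = (π^3_{a,b}∘Ψ∘ι^2_{a,b})∘(π^2_{a,b}∘Θ∘ι^1_{a,b}). -/
import Mathlib


/-- The ambient space of the direct sum `⊕_{(a,b)} I[a,b]^{m (a,b)}` of interval
representations: one copy of `K^{m p}` for each pair `p = (a,b)`. -/
abbrev IntSum (K : Type) [Field K] (m : ℕ × ℕ → ℕ) := ∀ p : ℕ × ℕ, Fin (m p) → K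

/-- Projection of the ambient space onto the part supported at vertex `v`: it keeps the
component of `I[a,b]` exactly when `[a,b]` is a valid interval of the `A_n` quiver
(`1 ≤ a ≤ b ≤ n`) containing `v`.  The vertex-`v` space of the direct-sum representation
is the image of `trunc`, and for an arrow between vertices `i` and `i+1` the structure
map of the representation is (the restriction of) `trunc (i+1) ∘ trunc i`, keeping exactly
the intervals containing both endpoints. -/
def trunc (K : Type) [Field K] (n : ℕ) (m : ℕ × ℕ → ℕ) (v : ℕ) :
    IntSum K m →ₗ[K] IntSum K m :=
  LinearMap.pi fun p =>
    if 1 ≤ p.1 ∧ p.1 ≤ v ∧ v ≤ p.2 ∧ p.2 ≤ n then LinearMap.proj p else 0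

/-- A morphism of representations of the `A_n` quiver with orientation `τ`
(`τ i = true` meaning the `i`-th arrow points forward `i → i+1`) between the direct sums
of interval representations with multiplicities `m` and `m'`: a family of linear maps
`θ v` (one for each vertex), supported on the vertex spaces, commuting with the structure
maps of the two representations. -/
structure RepMor (K : Type) [Field K] (n : ℕ) (τ : ℕ → Bool) (m m' : ℕ × ℕ → ℕ) where
  θ : ℕ → IntSum K m →ₗ[K] IntSum K m'
  supp : ∀ v, trunc K n m' v ∘ₗ θ v ∘ₗ trunc K n m v = θ v
  commF : ∀ i, 1 ≤ i → i < n → τ i = true →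
    θ (i + 1) ∘ₗ trunc K n m (i + 1) ∘ₗ trunc K n m i =
      trunc K n m' (i + 1) ∘ₗ θ i ∘ₗ trunc K n m i
  commB : ∀ i, 1 ≤ i → i < n → τ i = false →
    θ i ∘ₗ trunc K n m i ∘ₗ trunc K n m (i + 1) =
      trunc K n m' i ∘ₗ θ (i + 1) ∘ₗ trunc K n m (i + 1)

/-- The diagonal block of a morphism at the interval `I[p.1, p.2]` and vertex `v`:
the composition (projection onto the `I[a,b]`-isotypic summand) ∘ (the morphism) ∘
(inclusion of the `I[a,b]`-isotypic summand). -/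
def blk {K : Type} [Field K] {n : ℕ} {τ : ℕ → Bool} {m m' : ℕ × ℕ → ℕ}
    (Θ : RepMor K n τ m m') (p : ℕ × ℕ) (v : ℕ) :
    (Fin (m p) → K) →ₗ[K] (Fin (m' p) → K) :=
  LinearMap.proj p ∘ₗ Θ.θ v ∘ₗ LinearMap.single K (fun p => Fin (m p) → K) p

namespace BlkAux

variable {K : Type} [Field K] {n : ℕ} {τ : ℕ → Bool} {m m' m₁ m₂ m₃ : ℕ × ℕ → ℕ}

/-- The condition that `p` is a valid interval of the `A_n` quiver containing `v`. -/
abbrev Pv (n : ℕ) (p : ℕ × ℕ) (v : ℕ) : Prop :=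
  1 ≤ p.1 ∧ p.1 ≤ v ∧ v ≤ p.2 ∧ p.2 ≤ n

lemma trunc_apply (v : ℕ) (x : IntSum K m) (q : ℕ × ℕ) :
    trunc K n m v x q = if Pv n q v then x q else 0 := by
  show (if 1 ≤ q.1 ∧ q.1 ≤ v ∧ v ≤ q.2 ∧ q.2 ≤ n then (LinearMap.proj q : IntSum K m →ₗ[K] _)
      else 0) x = _
  by_cases h : Pv n q v
  · rw [if_pos h, if_pos h]; rfl
  · rw [if_neg h, if_neg h]; rfl

lemma trunc_single_apply (v : ℕ) (p : ℕ × ℕ) (x : Fin (m p) → K) :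
    trunc K n m v (Pi.single p x) = if Pv n p v then Pi.single p x else 0 := by
  funext r
  rw [trunc_apply]
  by_cases hr : r = p
  · subst hr
    by_cases h : Pv n r v
    · rw [if_pos h, if_pos h]
    · rw [if_neg h, if_neg h]; rfl
  · by_cases h : Pv n p v
    · rw [if_pos h]; simp [Pi.single_eq_of_ne hr]
    · rw [if_neg h]; simp [Pi.single_eq_of_ne hr]

lemma trunc_trunc (v : ℕ) (y : IntSum K m) :
    trunc K n m v (trunc K n m v y) = trunc K n m v y := by
  funext r
  simp only [trunc_apply]
  split <;> simp_all

/-- The block of a morphism from the `p`-isotypic summand to the `q`-isotypic summand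
at vertex `w`. -/
def Fblk (Θ : RepMor K n τ m m') (p q : ℕ × ℕ) (w : ℕ) :
    (Fin (m p) → K) →ₗ[K] (Fin (m' q) → K) :=
  LinearMap.proj q ∘ₗ Θ.θ w ∘ₗ LinearMap.single K (fun p => Fin (m p) → K) p

lemma Fblk_apply (Θ : RepMor K n τ m m') (p q : ℕ × ℕ) (w : ℕ) (x : Fin (m p) → K) :
    Fblk Θ p q w x = Θ.θ w (Pi.single p x) q := by
  simp [Fblk, LinearMap.single_apply]

lemma theta_single_apply (Θ : RepMor K n τ m m') (p : ℕ × ℕ) (w : ℕ) (x : Fin (m p) → K) :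
    Θ.θ w (Pi.single p x) =
      trunc K n m' w (Θ.θ w (if Pv n p w then Pi.single p x else 0)) := by
  conv_lhs => rw [← Θ.supp w]
  simp only [LinearMap.comp_apply]
  rw [trunc_single_apply]

lemma Fblk_zero_left (Θ : RepMor K n τ m m') {p : ℕ × ℕ} (q : ℕ × ℕ) {w : ℕ}
    (h : ¬ Pv n p w) : Fblk Θ p q w = 0 := by
  apply LinearMap.ext; intro x
  rw [Fblk_apply, theta_single_apply, if_neg h]
  simp

lemma Fblk_zero_right (Θ : RepMor K n τ m m') (p : ℕ × ℕ) {q : ℕ × ℕ} {w : ℕ}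
    (h : ¬ Pv n q w) : Fblk Θ p q w = 0 := by
  apply LinearMap.ext; intro x
  rw [Fblk_apply, theta_single_apply]
  rw [trunc_apply, if_neg h]
  rfl

lemma stepF (Θ : RepMor K n τ m m') {p q : ℕ × ℕ} {i : ℕ}
    (h1 : 1 ≤ i) (h2 : i < n) (ht : τ i = true)
    (hp1 : Pv n p i) (hp2 : Pv n p (i + 1)) (hq : Pv n q (i + 1)) :
    Fblk Θ p q (i + 1) = Fblk Θ p q i := by
  apply LinearMap.ext; intro x
  have E := LinearMap.congr_fun (Θ.commF i h1 h2 ht) (Pi.single p x)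
  simp only [LinearMap.comp_apply] at E
  rw [trunc_single_apply, if_pos hp1, trunc_single_apply, if_pos hp2] at E
  have E2 := congr_fun E q
  rw [trunc_apply, if_pos hq] at E2
  rw [Fblk_apply, Fblk_apply]
  exact E2

lemma stepF2 (Θ : RepMor K n τ m m') {p q : ℕ × ℕ} {i : ℕ}
    (h1 : 1 ≤ i) (h2 : i < n) (ht : τ i = true)
    (hp1 : Pv n p i) (hp2 : ¬ Pv n p (i + 1)) (hq : Pv n q (i + 1)) :
    Fblk Θ p q i = 0 := by
  apply LinearMap.ext; intro x
  have E := LinearMap.congr_fun (Θ.commF i h1 h2 ht) (Pi.single p x)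
  simp only [LinearMap.comp_apply] at E
  rw [trunc_single_apply, if_pos hp1, trunc_single_apply, if_neg hp2] at E
  have E2 := congr_fun E q
  rw [trunc_apply, if_pos hq] at E2
  rw [Fblk_apply]
  simp only [map_zero] at E2
  rw [← E2]
  rfl

lemma stepB (Θ : RepMor K n τ m m') {p q : ℕ × ℕ} {i : ℕ}
    (h1 : 1 ≤ i) (h2 : i < n) (ht : τ i = false)
    (hp1 : Pv n p i) (hp2 : Pv n p (i + 1)) (hq : Pv n q i) :
    Fblk Θ p q i = Fblk Θ p q (i + 1) := by
  apply LinearMap.ext; intro x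
  have E := LinearMap.congr_fun (Θ.commB i h1 h2 ht) (Pi.single p x)
  simp only [LinearMap.comp_apply] at E
  rw [trunc_single_apply, if_pos hp2, trunc_single_apply, if_pos hp1] at E
  have E2 := congr_fun E q
  rw [trunc_apply, if_pos hq] at E2
  rw [Fblk_apply, Fblk_apply]
  exact E2

lemma stepB2 (Θ : RepMor K n τ m m') {p q : ℕ × ℕ} {i : ℕ}
    (h1 : 1 ≤ i) (h2 : i < n) (ht : τ i = false)
    (hp2 : Pv n p (i + 1)) (hp1 : ¬ Pv n p i) (hq : Pv n q i) :
    Fblk Θ p q (i + 1) = 0 := by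
  apply LinearMap.ext; intro x
  have E := LinearMap.congr_fun (Θ.commB i h1 h2 ht) (Pi.single p x)
  simp only [LinearMap.comp_apply] at E
  rw [trunc_single_apply, if_pos hp2, trunc_single_apply, if_neg hp1] at E
  have E2 := congr_fun E q
  rw [trunc_apply, if_pos hq] at E2
  rw [Fblk_apply]
  simp only [map_zero] at E2
  rw [← E2]
  rfl

lemma h_const (Θ : RepMor K n τ m₁ m₂) (Ψ : RepMor K n τ m₂ m₃) (p q : ℕ × ℕ)
    (w u : ℕ) (hwu : w ≤ u)
    (H : ∀ j, w ≤ j → j ≤ u → Pv n p j ∧ Pv n q j) :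
    Fblk Ψ q p u ∘ₗ Fblk Θ p q u = Fblk Ψ q p w ∘ₗ Fblk Θ p q w := by
  induction u, hwu using Nat.le_induction with
  | base => rfl
  | succ u hu IH =>
    have hpu : Pv n p u := (H u hu (by omega)).1
    have hqu : Pv n q u := (H u hu (by omega)).2
    have hpu1 : Pv n p (u + 1) := (H (u + 1) (by omega) le_rfl).1
    have hqu1 : Pv n q (u + 1) := (H (u + 1) (by omega) le_rfl).2
    have h1 : 1 ≤ u := le_trans hpu.1 hpu.2.1
    have h2 : u < n := by have := hpu1.2.2; omega
    have IH' := IH (fun j hj hj' => H j hj (by omega))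
    cases hτ : τ u with
    | true =>
      rw [stepF Θ h1 h2 hτ hpu hpu1 hqu1, stepF Ψ h1 h2 hτ hqu hqu1 hpu1]
      exact IH'
    | false =>
      rw [← stepB Θ h1 h2 hτ hpu hpu1 hqu, ← stepB Ψ h1 h2 hτ hqu hqu1 hpu]
      exact IH'

lemma cross (Θ : RepMor K n τ m₁ m₂) (Ψ : RepMor K n τ m₂ m₃) {p q : ℕ × ℕ} {v : ℕ}
    (hp : Pv n p v) (hq : Pv n q v) (hne : q ≠ p) :
    Fblk Ψ q p v ∘ₗ Fblk Θ p q v = 0 := by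
  obtain ⟨hp1, hp2, hp3, hp4⟩ := hp
  obtain ⟨hq1, hq2, hq3, hq4⟩ := hq
  rcases Nat.lt_trichotomy p.1 q.1 with hac | hac | hac
  · -- p.1 < q.1 : boundary at q.1 = i + 1, with i + 1 ≤ v
    obtain ⟨i, hi⟩ : ∃ i, q.1 = i + 1 := ⟨q.1 - 1, by omega⟩
    have hc : Fblk Ψ q p (i + 1) ∘ₗ Fblk Θ p q (i + 1) = 0 := by
      cases hτ : τ i with
      | true =>
        have hf : Fblk Θ p q (i + 1) = 0 := by
          rw [stepF Θ (by omega) (by omega) hτ ⟨hp1, by omega, by omega, hp4⟩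
            ⟨hp1, by omega, by omega, hp4⟩ ⟨hq1, by omega, by omega, hq4⟩]
          exact Fblk_zero_right Θ p (by unfold Pv; omega)
        rw [hf, LinearMap.comp_zero]
      | false =>
        have hg : Fblk Ψ q p (i + 1) = 0 :=
          stepB2 Ψ (by omega) (by omega) hτ ⟨hq1, by omega, by omega, hq4⟩
            (by unfold Pv; omega) ⟨hp1, by omega, by omega, hp4⟩
        rw [hg, LinearMap.zero_comp]
    have hcv := h_const Θ Ψ p q (i + 1) v (by omega)
      (fun j hj hj' => ⟨⟨hp1, by omega, by omega, hp4⟩, ⟨hq1, by omega, by omega, hq4⟩⟩)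
    rw [hcv, hc]
  · -- p.1 = q.1 : compare right endpoints
    have hbd : p.2 ≠ q.2 := by
      intro h; exact hne (Prod.ext hac.symm h.symm)
    rcases Nat.lt_trichotomy p.2 q.2 with hbd' | hbd' | hbd'
    · -- p.2 < q.2 : boundary at p.2, with v ≤ p.2
      have hc : Fblk Ψ q p p.2 ∘ₗ Fblk Θ p q p.2 = 0 := by
        cases hτ : τ p.2 with
        | true =>
          have hf : Fblk Θ p q p.2 = 0 :=
            stepF2 Θ (by omega) (by omega) hτ ⟨hp1, by omega, le_rfl, hp4⟩
              (by unfold Pv; omega) ⟨hq1, by omega, by omega, hq4⟩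
          rw [hf, LinearMap.comp_zero]
        | false =>
          have hg : Fblk Ψ q p p.2 = 0 := by
            rw [stepB Ψ (by omega) (by omega) hτ ⟨hq1, by omega, by omega, hq4⟩
              ⟨hq1, by omega, by omega, hq4⟩ ⟨hp1, by omega, le_rfl, hp4⟩]
            exact Fblk_zero_right Ψ q (by unfold Pv; omega)
          rw [hg, LinearMap.zero_comp]
      have hcv := h_const Θ Ψ p q v p.2 hp3
        (fun j hj hj' => ⟨⟨hp1, by omega, by omega, hp4⟩, ⟨hq1, by omega, by omega, hq4⟩⟩)
      rw [hcv] at hc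
      exact hc
    · exact absurd hbd' hbd
    · -- q.2 < p.2 : boundary at q.2, with v ≤ q.2
      have hc : Fblk Ψ q p q.2 ∘ₗ Fblk Θ p q q.2 = 0 := by
        cases hτ : τ q.2 with
        | true =>
          have hg : Fblk Ψ q p q.2 = 0 :=
            stepF2 Ψ (by omega) (by omega) hτ ⟨hq1, by omega, le_rfl, hq4⟩
              (by unfold Pv; omega) ⟨hp1, by omega, by omega, hp4⟩
          rw [hg, LinearMap.zero_comp]
        | false =>
          have hf : Fblk Θ p q q.2 = 0 := by
            rw [stepB Θ (by omega) (by omega) hτ ⟨hp1, by omega, by omega, hp4⟩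
              ⟨hp1, by omega, by omega, hp4⟩ ⟨hq1, by omega, le_rfl, hq4⟩]
            exact Fblk_zero_right Θ p (by unfold Pv; omega)
          rw [hf, LinearMap.comp_zero]
      have hcv := h_const Θ Ψ p q v q.2 hq3
        (fun j hj hj' => ⟨⟨hp1, by omega, by omega, hp4⟩, ⟨hq1, by omega, by omega, hq4⟩⟩)
      rw [hcv] at hc
      exact hc
  · -- q.1 < p.1 : boundary at p.1 = i + 1
    obtain ⟨i, hi⟩ : ∃ i, p.1 = i + 1 := ⟨p.1 - 1, by omega⟩
    have hc : Fblk Ψ q p (i + 1) ∘ₗ Fblk Θ p q (i + 1) = 0 := by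
      cases hτ : τ i with
      | true =>
        have hg : Fblk Ψ q p (i + 1) = 0 := by
          rw [stepF Ψ (by omega) (by omega) hτ ⟨hq1, by omega, by omega, hq4⟩
            ⟨hq1, by omega, by omega, hq4⟩ ⟨hp1, by omega, by omega, hp4⟩]
          exact Fblk_zero_right Ψ q (by unfold Pv; omega)
        rw [hg, LinearMap.zero_comp]
      | false =>
        have hf : Fblk Θ p q (i + 1) = 0 :=
          stepB2 Θ (by omega) (by omega) hτ ⟨hp1, by omega, by omega, hp4⟩
            (by unfold Pv; omega) ⟨hq1, by omega, by omega, hq4⟩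
        rw [hf, LinearMap.comp_zero]
    have hcv := h_const Θ Ψ p q (i + 1) v (by omega)
      (fun j hj hj' => ⟨⟨hp1, by omega, by omega, hp4⟩, ⟨hq1, by omega, by omega, hq4⟩⟩)
    rw [hcv, hc]

end BlkAux

/-- For a general `A_n` quiver with arbitrary orientation `τ` and morphisms
`Θ : M₁ → M₂`, `Ψ : M₂ → M₃` between direct sums of interval representations, the diagonal
block of the composition equals the composition of the diagonal blocks, for every interval
`I[a,b]` (at each vertex `v ∈ [a,b]`). -/
theorem blk_comp_general (K : Type) [Field K] (n : ℕ) (τ : ℕ → Bool)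
    (m₁ m₂ m₃ : ℕ × ℕ → ℕ) (Θ : RepMor K n τ m₁ m₂) (Ψ : RepMor K n τ m₂ m₃)
    (a b v : ℕ) (ha : 1 ≤ a) (hab : a ≤ b) (hb : b ≤ n) (hav : a ≤ v) (hvb : v ≤ b) :
    LinearMap.proj (a, b) ∘ₗ (Ψ.θ v ∘ₗ Θ.θ v) ∘ₗ
        LinearMap.single K (fun p => Fin (m₁ p) → K) (a, b) =
      blk Ψ (a, b) v ∘ₗ blk Θ (a, b) v := by
  classical
  set p : ℕ × ℕ := (a, b) with hpdef
  have hp : BlkAux.Pv n p v := ⟨ha, hav, hvb, hb⟩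
  set S : Finset (ℕ × ℕ) := Finset.Icc 1 v ×ˢ Finset.Icc v n with hS
  have hmem : ∀ r : ℕ × ℕ, r ∈ S ↔ BlkAux.Pv n r v := by
    intro r
    rw [hS, Finset.mem_product, Finset.mem_Icc, Finset.mem_Icc]
    unfold BlkAux.Pv
    omega
  apply LinearMap.ext; intro x
  simp only [LinearMap.comp_apply, LinearMap.proj_apply, LinearMap.single_apply]
  -- rewrite Ψ.θ v y into Ψ.θ v (trunc y)
  have key : ∀ y : IntSum K m₂, Ψ.θ v y = Ψ.θ v (trunc K n m₂ v y) := by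
    intro y
    conv_lhs => rw [← Ψ.supp v]
    conv_rhs => rw [← Ψ.supp v]
    simp only [LinearMap.comp_apply]
    rw [BlkAux.trunc_trunc]
  have expand : trunc K n m₂ v (Θ.θ v (Pi.single p x)) =
      ∑ q ∈ S, Pi.single q ((Θ.θ v (Pi.single p x)) q) := by
    funext r
    rw [BlkAux.trunc_apply, Finset.sum_apply]
    by_cases hr : r ∈ S
    · rw [if_pos ((hmem r).mp hr)]
      rw [Finset.sum_eq_single_of_mem r hr]
      · rw [Pi.single_eq_same]
      · intro q hqS hqr
        exact Pi.single_eq_of_ne hqr.symm _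
    · rw [if_neg (fun hc => hr ((hmem r).mpr hc))]
      symm
      apply Finset.sum_eq_zero
      intro q hqS
      exact Pi.single_eq_of_ne (fun h => hr (by rw [h]; exact hqS)) _
  rw [key, expand, map_sum, Finset.sum_apply]
  rw [Finset.sum_eq_single p]
  · show BlkAux.Fblk Ψ p p v (BlkAux.Fblk Θ p p v x) = _
    rfl
  · intro q hqS hqp
    have h0 := BlkAux.cross Θ Ψ hp ((hmem q).mp hqS) hqp
    have h1 := LinearMap.congr_fun h0 x
    simpa [BlkAux.Fblk_apply] using h1
  · intro hpS
    exact absurd ((hmem p).mpr hp) hpS
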